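/- The natural rate of interest is strictly increasing in the level of government debt (Proposition 3, global form): if 0 ≤ b₁ < b₂ < bmax, and r₁, r₂ are reals with rⱼ > −1, Dh(bⱼ,rⱼ) > 0, Dl(bⱼ,rⱼ) > 0 and F(bⱼ,rⱼ) = 0 for j = 1,2, then r₁ < r₂. -/
import Mathlib


/-- High-productivity stationary consumption denominator:
Dh(b,r) = w·zh + (1−β)·(1+r)·b·(1−zh) with w = (ε−1)/ε. -/
noncomputable def Dh (β ε zh : ℝ) (b r : ℝ) : ℝ :=
  ((ε - 1) / ε) * zh + (1 - β) * (1 + r) * b * (1 - zh)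

/-- Low-productivity stationary consumption denominator:
Dl(b,r) = w·zl + (1−β)·(1+r)·b·(1−zl) with w = (ε−1)/ε. -/
noncomputable def Dl (β ε zl : ℝ) (b r : ℝ) : ℝ :=
  ((ε - 1) / ε) * zl + (1 - β) * (1 + r) * b * (1 - zl)

/-- Natural-rate equation residual:
F(b,r) = β·ρ·(1+r)/Dh(b,r) + β·(1−ρ)·(1+r)/Dl(b,r) − ε/(ε−1). -/
noncomputable def F (β ε ρ zh zl : ℝ) (b r : ℝ) : ℝ :=
  β * ρ * (1 + r) / Dh β ε zh b r
    + β * (1 - ρ) * (1 + r) / Dl β ε zl b r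
    - ε / (ε - 1)

/-- Algebraic identity: w·M(u) − Dh(u)·Dl(u) = (zh−1)(1−zl)(w−u)². -/
lemma lemA (ρ zh zl w u : ℝ) (hmean : ρ * zh + (1 - ρ) * zl = 1) :
    w * (ρ * (w * zl + u * (1 - zl)) + (1 - ρ) * (w * zh + u * (1 - zh)))
      - (w * zh + u * (1 - zh)) * (w * zl + u * (1 - zl))
    = (zh - 1) * (1 - zl) * (w - u) ^ 2 := by
  linear_combination (w * (u - w)) * hmean

/-- Algebraic identity underlying strict monotonicity of φ. -/
lemma lemB (ρ zh zl w u v : ℝ) (hmean : ρ * zh + (1 - ρ) * zl = 1) :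
    (w * zh + v * (1 - zh)) * (w * zl + v * (1 - zl)) *
        (ρ * (w * zl + u * (1 - zl)) + (1 - ρ) * (w * zh + u * (1 - zh)))
      - (w * zh + u * (1 - zh)) * (w * zl + u * (1 - zl)) *
        (ρ * (w * zl + v * (1 - zl)) + (1 - ρ) * (w * zh + v * (1 - zh)))
    = (v - u) * ((zh - 1) * (1 - zl)) *
        ((zh + zl - 1) * ((w - u) * (w - v)) + (w * w - u * v)) := by
  linear_combination
    ((w * zh + v * (1 - zh)) * (w * zl + v * (1 - zl)) * (u - w)
      - (w * zh + u * (1 - zh)) * (w * zl + u * (1 - zl)) * (v - w)) * hmean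

set_option maxHeartbeats 2000000 in
/-- Core comparison lemma, stated in cleared polynomial form. -/
lemma key (β ρ zh zl w : ℝ)
    (hβ0 : 0 < β) (hρ0 : 0 < ρ) (hρ1 : ρ < 1)
    (hzl0 : 0 < zl) (hzl1 : zl < 1) (hzh : 1 < zh)
    (hmean : ρ * zh + (1 - ρ) * zl = 1) (hw : 0 < w)
    (c₁ c₂ x₁ x₂ : ℝ)
    (hc₁ : 0 ≤ c₁) (hc12 : c₁ < c₂) (hcm : c₂ < β * w)
    (hx₁ : 0 < x₁) (hx₂ : 0 < x₂)
    (hDh₁ : 0 < w * zh + c₁ * x₁ * (1 - zh)) (hDl₁ : 0 < w * zl + c₁ * x₁ * (1 - zl))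
    (hDh₂ : 0 < w * zh + c₂ * x₂ * (1 - zh)) (hDl₂ : 0 < w * zl + c₂ * x₂ * (1 - zl))
    (hE₁ : β * x₁ * w * (ρ * (w * zl + c₁ * x₁ * (1 - zl)) + (1 - ρ) * (w * zh + c₁ * x₁ * (1 - zh)))
        = (w * zh + c₁ * x₁ * (1 - zh)) * (w * zl + c₁ * x₁ * (1 - zl)))
    (hE₂ : β * x₂ * w * (ρ * (w * zl + c₂ * x₂ * (1 - zl)) + (1 - ρ) * (w * zh + c₂ * x₂ * (1 - zh)))
        = (w * zh + c₂ * x₂ * (1 - zh)) * (w * zl + c₂ * x₂ * (1 - zl))) :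
    x₁ < x₂ := by
  set u := c₁ * x₁ with hu
  set u2 := c₂ * x₂ with hu2
  set v := c₂ * x₁ with hv
  have hc₂ : 0 < c₂ := lt_of_le_of_lt hc₁ hc12
  have hu0 : 0 ≤ u := by rw [hu]; exact mul_nonneg hc₁ hx₁.le
  have hv0 : 0 < v := by rw [hv]; exact mul_pos hc₂ hx₁
  have huv : u < v := by
    rw [hu, hv]
    have h1 := mul_pos (sub_pos.mpr hc12) hx₁
    linarith [h1]
  have hM₁ : 0 < ρ * (w * zl + u * (1 - zl)) + (1 - ρ) * (w * zh + u * (1 - zh)) := by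
    have h1 := mul_pos hρ0 hDl₁
    have h2 := mul_pos (sub_pos.mpr hρ1) hDh₁
    linarith
  have hk : (0:ℝ) < (zh - 1) * (1 - zl) := mul_pos (by linarith) (by linarith)
  have hwM : 0 < w * (ρ * (w * zl + u * (1 - zl)) + (1 - ρ) * (w * zh + u * (1 - zh))) :=
    mul_pos hw hM₁
  have hx1b : β * x₁ ≤ 1 := by
    have gA := lemA ρ zh zl w u hmean
    have hsq := mul_nonneg hk.le (sq_nonneg (w - u))
    by_contra h'
    push_neg at h'
    have hneg : w * (ρ * (w * zl + u * (1 - zl)) + (1 - ρ) * (w * zh + u * (1 - zh)))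
        * (1 - β * x₁) < 0 :=
      mul_neg_of_pos_of_neg hwM (by linarith)
    linarith [hE₁, gA, hsq, hneg]
  have hvw : v < w := by
    rw [hv]
    have h1 := mul_pos (sub_pos.mpr hcm) hx₁
    have h2 := mul_nonneg hw.le (by linarith : (0:ℝ) ≤ 1 - β * x₁)
    linarith [h1, h2]
  have huw : u < w := lt_trans huv hvw
  have hDh' : 0 < w * zh + v * (1 - zh) := by
    have h1 := mul_pos (by linarith : (0:ℝ) < zh - 1) (by linarith : (0:ℝ) < w - v)
    linarith [h1, hw]
  have hDl' : 0 < w * zl + v * (1 - zl) := by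
    have h1 := mul_pos hv0 (by linarith : (0:ℝ) < 1 - zl)
    have h2 := mul_pos hw hzl0
    linarith
  have hbr : 0 < (zh + zl - 1) * ((w - u) * (w - v)) + (w * w - u * v) := by
    have h2 : u * v < w * w := by
      have ha := mul_pos hw (sub_pos.mpr hvw)
      have hb := mul_pos (sub_pos.mpr huw) hv0
      linarith [ha, hb]
    have h3 := mul_pos (by linarith : (0:ℝ) < zh + zl - 1)
      (mul_pos (by linarith : (0:ℝ) < w - u) (by linarith : (0:ℝ) < w - v))
    linarith [h2, h3]
  have hNM : (w * zh + u * (1 - zh)) * (w * zl + u * (1 - zl)) *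
        (ρ * (w * zl + v * (1 - zl)) + (1 - ρ) * (w * zh + v * (1 - zh)))
      < (w * zh + v * (1 - zh)) * (w * zl + v * (1 - zl)) *
        (ρ * (w * zl + u * (1 - zl)) + (1 - ρ) * (w * zh + u * (1 - zh))) := by
    have hB := lemB ρ zh zl w u v hmean
    have hprod := mul_pos (mul_pos (by linarith : (0:ℝ) < v - u) hk) hbr
    linarith [hB, hprod]
  have hMv : 0 < ρ * (w * zl + v * (1 - zl)) + (1 - ρ) * (w * zh + v * (1 - zh)) := by
    have h1 := mul_pos hρ0 hDl'
    have h2 := mul_pos (sub_pos.mpr hρ1) hDh'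
    linarith
  have hstep : β * x₁ * w * (ρ * (w * zl + v * (1 - zl)) + (1 - ρ) * (w * zh + v * (1 - zh)))
      < (w * zh + v * (1 - zh)) * (w * zl + v * (1 - zl)) := by
    have h3 : ((w * zh + v * (1 - zh)) * (w * zl + v * (1 - zl))
          - β * x₁ * w * (ρ * (w * zl + v * (1 - zl)) + (1 - ρ) * (w * zh + v * (1 - zh))))
        * (ρ * (w * zl + u * (1 - zl)) + (1 - ρ) * (w * zh + u * (1 - zh)))
      = (w * zh + v * (1 - zh)) * (w * zl + v * (1 - zl)) *
          (ρ * (w * zl + u * (1 - zl)) + (1 - ρ) * (w * zh + u * (1 - zh)))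
        - (w * zh + u * (1 - zh)) * (w * zl + u * (1 - zl)) *
          (ρ * (w * zl + v * (1 - zl)) + (1 - ρ) * (w * zh + v * (1 - zh))) := by
      linear_combination (-(ρ * (w * zl + v * (1 - zl)) + (1 - ρ) * (w * zh + v * (1 - zh)))) * hE₁
    by_contra h'
    push_neg at h'
    have h4 : ((w * zh + v * (1 - zh)) * (w * zl + v * (1 - zl))
          - β * x₁ * w * (ρ * (w * zl + v * (1 - zl)) + (1 - ρ) * (w * zh + v * (1 - zh))))
        * (ρ * (w * zl + u * (1 - zl)) + (1 - ρ) * (w * zh + u * (1 - zh))) ≤ 0 :=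
      mul_nonpos_of_nonpos_of_nonneg (by linarith) hM₁.le
    rw [h3] at h4
    linarith
  by_contra hcon
  push_neg at hcon
  have hT1 : 0 ≤ x₁ * (w * zh + u2 * (1 - zh)) - x₂ * (w * zh + v * (1 - zh)) := by
    rw [hu2, hv]
    have h1 := mul_nonneg (mul_nonneg hw.le (by linarith : (0:ℝ) ≤ zh))
      (by linarith : (0:ℝ) ≤ x₁ - x₂)
    linarith [h1]
  have hT2 : 0 ≤ x₁ * (w * zl + u2 * (1 - zl)) - x₂ * (w * zl + v * (1 - zl)) := by
    rw [hu2, hv]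
    have h1 := mul_nonneg (mul_nonneg hw.le (by linarith : (0:ℝ) ≤ zl))
      (by linarith : (0:ℝ) ≤ x₁ - x₂)
    linarith [h1]
  have hA := mul_lt_mul_of_pos_right hstep (mul_pos hDh₂ hDl₂)
  have hBe : β * x₂ * w * (ρ * (w * zl + u2 * (1 - zl)) + (1 - ρ) * (w * zh + u2 * (1 - zh)))
        * ((w * zh + v * (1 - zh)) * (w * zl + v * (1 - zl)))
      = (w * zh + u2 * (1 - zh)) * (w * zl + u2 * (1 - zl))
        * ((w * zh + v * (1 - zh)) * (w * zl + v * (1 - zl))) := by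
    rw [hE₂]
  have hP1 : 0 ≤ β * w * ρ * ((w * zl + u2 * (1 - zl)) * (w * zl + v * (1 - zl)))
      * (x₁ * (w * zh + u2 * (1 - zh)) - x₂ * (w * zh + v * (1 - zh))) :=
    mul_nonneg (mul_nonneg (mul_nonneg (mul_nonneg hβ0.le hw.le) hρ0.le)
      (mul_nonneg hDl₂.le hDl'.le)) hT1
  have hP2 : 0 ≤ β * w * (1 - ρ) * ((w * zh + u2 * (1 - zh)) * (w * zh + v * (1 - zh)))
      * (x₁ * (w * zl + u2 * (1 - zl)) - x₂ * (w * zl + v * (1 - zl))) :=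
    mul_nonneg (mul_nonneg (mul_nonneg (mul_nonneg hβ0.le hw.le)
      (by linarith : (0:ℝ) ≤ 1 - ρ)) (mul_nonneg hDh₂.le hDh'.le)) hT2
  linarith [hA, hBe, hP1, hP2]

set_option maxHeartbeats 2000000 in
/-- Proposition 3 (global form): the natural rate of interest is strictly
increasing in the level of government debt. -/
theorem stmt_14 (β ε ρ zh zl : ℝ)
    (hβ0 : 0 < β) (hβ1 : β < 1) (hε : 1 < ε)
    (hρ0 : 0 < ρ) (hρ1 : ρ < 1)
    (hzl0 : 0 < zl) (hzl1 : zl < 1) (hzh : 1 < zh)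
    (hmean : ρ * zh + (1 - ρ) * zl = 1) :
    ∀ b₁ b₂ r₁ r₂ : ℝ,
      0 ≤ b₁ → b₁ < b₂ → b₂ < ((ε - 1) / ε) * (β / (1 - β)) →
      r₁ > -1 → Dh β ε zh b₁ r₁ > 0 → Dl β ε zl b₁ r₁ > 0 →
      F β ε ρ zh zl b₁ r₁ = 0 →
      r₂ > -1 → Dh β ε zh b₂ r₂ > 0 → Dl β ε zl b₂ r₂ > 0 →
      F β ε ρ zh zl b₂ r₂ = 0 →
      r₁ < r₂ := by
  intro b₁ b₂ r₁ r₂ hb₁ hb12 hbmax hr₁ hDh₁ hDl₁ hF₁ hr₂ hDh₂ hDl₂ hF₂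
  have hε0 : (0:ℝ) < ε := lt_trans one_pos hε
  have hεm : (0:ℝ) < ε - 1 := by linarith
  have hw : 0 < (ε - 1) / ε := div_pos hεm hε0
  have h1β : (0:ℝ) < 1 - β := by linarith
  have hx₁ : (0:ℝ) < 1 + r₁ := by linarith
  have hx₂ : (0:ℝ) < 1 + r₂ := by linarith
  have hεw : ε * ((ε - 1) / ε) = ε - 1 := by field_simp
  simp only [Dh, Dl] at hDh₁ hDl₁ hDh₂ hDl₂
  simp only [F, Dh, Dl] at hF₁ hF₂
  rw [sub_eq_zero, div_add_div _ _ (ne_of_gt hDh₁) (ne_of_gt hDl₁),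
    div_eq_div_iff (mul_pos hDh₁ hDl₁).ne' hεm.ne'] at hF₁
  rw [sub_eq_zero, div_add_div _ _ (ne_of_gt hDh₂) (ne_of_gt hDl₂),
    div_eq_div_iff (mul_pos hDh₂ hDl₂).ne' hεm.ne'] at hF₂
  have hE₁ : ε * (β * (1 + r₁) * ((ε - 1) / ε) *
        (ρ * (((ε - 1) / ε) * zl + (1 - β) * (1 + r₁) * b₁ * (1 - zl))
          + (1 - ρ) * (((ε - 1) / ε) * zh + (1 - β) * (1 + r₁) * b₁ * (1 - zh))))
      = ε * ((((ε - 1) / ε) * zh + (1 - β) * (1 + r₁) * b₁ * (1 - zh))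
          * (((ε - 1) / ε) * zl + (1 - β) * (1 + r₁) * b₁ * (1 - zl))) := by
    linear_combination hF₁ + (β * (1 + r₁) *
      (ρ * (((ε - 1) / ε) * zl + (1 - β) * (1 + r₁) * b₁ * (1 - zl))
        + (1 - ρ) * (((ε - 1) / ε) * zh + (1 - β) * (1 + r₁) * b₁ * (1 - zh)))) * hεw
  have hE₂ : ε * (β * (1 + r₂) * ((ε - 1) / ε) *
        (ρ * (((ε - 1) / ε) * zl + (1 - β) * (1 + r₂) * b₂ * (1 - zl))
          + (1 - ρ) * (((ε - 1) / ε) * zh + (1 - β) * (1 + r₂) * b₂ * (1 - zh))))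
      = ε * ((((ε - 1) / ε) * zh + (1 - β) * (1 + r₂) * b₂ * (1 - zh))
          * (((ε - 1) / ε) * zl + (1 - β) * (1 + r₂) * b₂ * (1 - zl))) := by
    linear_combination hF₂ + (β * (1 + r₂) *
      (ρ * (((ε - 1) / ε) * zl + (1 - β) * (1 + r₂) * b₂ * (1 - zl))
        + (1 - ρ) * (((ε - 1) / ε) * zh + (1 - β) * (1 + r₂) * b₂ * (1 - zh)))) * hεw
  have hE₁' := mul_left_cancel₀ hε0.ne' hE₁
  have hE₂' := mul_left_cancel₀ hε0.ne' hE₂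
  have hcm : (1 - β) * b₂ < β * ((ε - 1) / ε) := by
    rw [show ((ε - 1) / ε) * (β / (1 - β)) = (((ε - 1) / ε) * β) / (1 - β) from by ring]
      at hbmax
    have h := (lt_div_iff₀ h1β).mp hbmax
    rw [mul_comm (1 - β) b₂, mul_comm β ((ε - 1) / ε)]
    exact h
  have hkey := key β ρ zh zl ((ε - 1) / ε) hβ0 hρ0 hρ1 hzl0 hzl1 hzh hmean hw
    ((1 - β) * b₁) ((1 - β) * b₂) (1 + r₁) (1 + r₂)
    (mul_nonneg h1β.le hb₁) (mul_lt_mul_of_pos_left hb12 h1β) hcm hx₁ hx₂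
    (hDh₁.trans_eq (by ring)) (hDl₁.trans_eq (by ring))
    (hDh₂.trans_eq (by ring)) (hDl₂.trans_eq (by ring))
    (by linear_combination hE₁') (by linear_combination hE₂')
  exact lt_of_add_lt_add_left hkey
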